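/- Let R be a commutative ring and f, g ∈ (R[X])[Y] with deg_Y f, deg_Y g ≤ d and all coefficients (as polynomials in X) of degree ≤ d. Then the resultant res_Y(f,g) ∈ R[X] has degree at most 2d² in X. -/

import Mathlib

open Polynomial

/-- The Sylvester matrix of two univariate polynomials. The first
`g.natDegree` rows contain shifted copies of the coefficients of `f`,
and the remaining `f.natDegree` rows contain shifted copies of the
coefficients of `g`. -/
noncomputable def sylvesterMatrix {R : Type*} [CommRing R] (f g : R[X]) :
    Matrix (Fin (g.natDegree + f.natDegree)) (Fin (g.natDegree + f.natDegree)) R :=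
  fun i j =>
    if (i : ℕ) < g.natDegree then
      if (i : ℕ) ≤ (j : ℕ) ∧ (j : ℕ) ≤ (i : ℕ) + f.natDegree then
        f.coeff (f.natDegree + i - j)
      else 0
    else
      if (i : ℕ) - g.natDegree ≤ (j : ℕ) ∧
          (j : ℕ) ≤ (i : ℕ) - g.natDegree + g.natDegree then
        g.coeff (g.natDegree + ((i : ℕ) - g.natDegree) - j)
      else 0

/-- The resultant of two univariate polynomials: the determinant of their
Sylvester matrix. -/
noncomputable def resultant {R : Type*} [CommRing R] (f g : R[X]) : R :=
  (sylvesterMatrix f g).det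

lemma natDegree_det_le_aux {R : Type*} [CommRing R] {n : ℕ}
    (M : Matrix (Fin n) (Fin n) R[X]) (d : ℕ)
    (h : ∀ i j, (M i j).natDegree ≤ d) : M.det.natDegree ≤ n * d := by
  rw [Matrix.det_apply]
  refine natDegree_sum_le_of_forall_le _ _ fun σ _ => ?_
  have hsmul : (Equiv.Perm.sign σ • ∏ i, M (σ i) i).natDegree
      = (∏ i, M (σ i) i).natDegree := by
    rcases Int.units_eq_one_or (Equiv.Perm.sign σ) with hs | hs <;>
      rw [hs] <;> simp [Units.smul_def]
  rw [hsmul]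
  refine (natDegree_prod_le _ _).trans ?_
  calc ∑ i : Fin n, (M (σ i) i).natDegree ≤ ∑ _i : Fin n, d :=
        Finset.sum_le_sum fun i _ => h _ _
    _ = n * d := by simp [mul_comm]

theorem resultant_degree_bound {R : Type*} [CommRing R]
    (d : ℕ) (f g : Polynomial (Polynomial R))
    (hf : f.natDegree ≤ d) (hg : g.natDegree ≤ d)
    (hfc : ∀ i, (f.coeff i).natDegree ≤ d)
    (hgc : ∀ i, (g.coeff i).natDegree ≤ d) :
    (_root_.resultant f g).natDegree ≤ 2 * d ^ 2 := by
  have h := natDegree_det_le_aux (sylvesterMatrix f g) d ?_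
  · refine h.trans ?_
    have : g.natDegree + f.natDegree ≤ 2 * d := by omega
    calc (g.natDegree + f.natDegree) * d ≤ 2 * d * d :=
          Nat.mul_le_mul_right d this
      _ = 2 * d ^ 2 := by ring
  · intro i j
    unfold sylvesterMatrix
    split_ifs <;> simp [hfc, hgc]
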